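/- Define the symmetrized third-order Dirichlet distortion on the positive orthant of ℝ³ by f^Sym(σ₁,σ₂,σ₃) = (1/2)·∑ᵢ₌₁³ σᵢ³ + (1/2)·(σ₁σ₂σ₃)·∑ₖ₌₁³ σₖ⁻³. Then: (i) f^Sym(σ) > 3/2 for every σ in the positive orthant; (ii) for every t > 0, f^Sym(t,t,t) = (3/2)·(t³ + 1), so the infimum of f^Sym over the positive orthant equals 3/2 and is not attained; (iii) f^Sym(1,1,1) = 3, and in particular (1,1,1) is not a minimizer, so the symmetrized third-order Dirichlet energy does not favor isometry. -/
import Mathlib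


/-- The symmetrized third-order Dirichlet distortion in singular values (3D). -/
noncomputable def fSymD3 (a b c : ℝ) : ℝ :=
  (1/2) * (a^3 + b^3 + c^3) +
  (1/2) * (a * b * c) * ((a⁻¹)^3 + (b⁻¹)^3 + (c⁻¹)^3)

lemma fSymD3_lower (a b c : ℝ) (ha : 0 < a) (hb : 0 < b) (hc : 0 < c) :
    3/2 < fSymD3 a b c := by
  have h1 : (a⁻¹)^3 + (b⁻¹)^3 + (c⁻¹)^3 ≥ 3 * (a⁻¹ * b⁻¹ * c⁻¹) := by
    nlinarith [sq_nonneg (a⁻¹ - b⁻¹), sq_nonneg (b⁻¹ - c⁻¹), sq_nonneg (a⁻¹ - c⁻¹),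
      inv_pos.mpr ha, inv_pos.mpr hb, inv_pos.mpr hc,
      mul_pos (inv_pos.mpr ha) (inv_pos.mpr hb)]
  have habc : 0 < a * b * c := by positivity
  have h2 : (1/2) * (a * b * c) * ((a⁻¹)^3 + (b⁻¹)^3 + (c⁻¹)^3) ≥ 3/2 := by
    have : (a * b * c) * (3 * (a⁻¹ * b⁻¹ * c⁻¹)) = 3 := by
      field_simp
    nlinarith [mul_le_mul_of_nonneg_left h1 habc.le]
  have h3 : 0 < (1/2) * (a^3 + b^3 + c^3) := by positivity
  unfold fSymD3
  linarith

lemma fSymD3_diag (t : ℝ) (ht : 0 < t) : fSymD3 t t t = (3/2) * (t^3 + 1) := by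
  unfold fSymD3
  field_simp
  ring

/-- `f^Sym > 3/2` on the positive orthant; on the diagonal
`f^Sym(t,t,t) = (3/2)(t³ + 1)`, so the infimum over the positive orthant is
`3/2` and is not attained; `f^Sym(1,1,1) = 3` and `(1,1,1)` is not a
minimizer: the symmetrized third-order Dirichlet energy does not favor
isometry. -/
theorem statement_9 :
    (∀ a b c : ℝ, 0 < a → 0 < b → 0 < c → 3/2 < fSymD3 a b c) ∧
    (∀ t : ℝ, 0 < t → fSymD3 t t t = (3/2) * (t^3 + 1)) ∧
    IsGLB {x : ℝ | ∃ a b c : ℝ, 0 < a ∧ 0 < b ∧ 0 < c ∧ x = fSymD3 a b c} (3/2) ∧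
    (3/2 : ℝ) ∉ {x : ℝ | ∃ a b c : ℝ, 0 < a ∧ 0 < b ∧ 0 < c ∧ x = fSymD3 a b c} ∧
    fSymD3 1 1 1 = 3 ∧
    (∃ a b c : ℝ, 0 < a ∧ 0 < b ∧ 0 < c ∧ fSymD3 a b c < fSymD3 1 1 1) := by
  refine ⟨fSymD3_lower, fSymD3_diag, ?_, ?_, ?_, ?_⟩
  · constructor
    · rintro x ⟨a, b, c, ha, hb, hc, rfl⟩
      exact (fSymD3_lower a b c ha hb hc).le
    · intro y hy
      by_contra h
      push_neg at h
      set ε : ℝ := y - 3/2 with hε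
      have hεpos : 0 < ε := by simp [hε]; linarith
      set t : ℝ := min 1 (ε/3) with htdef
      have ht : 0 < t := lt_min one_pos (by positivity)
      have ht1 : t ≤ 1 := min_le_left _ _
      have ht2 : t ≤ ε/3 := min_le_right _ _
      have hmem : fSymD3 t t t ∈ {x : ℝ | ∃ a b c : ℝ, 0 < a ∧ 0 < b ∧ 0 < c ∧ x = fSymD3 a b c} :=
        ⟨t, t, t, ht, ht, ht, rfl⟩
      have hy' := hy hmem
      rw [fSymD3_diag t ht] at hy'
      have ht3 : t^3 ≤ t := by nlinarith [mul_nonneg (mul_nonneg ht.le (sub_nonneg.mpr ht1)) (by linarith : (0:ℝ) ≤ 1 + t)]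
      nlinarith
  · rintro ⟨a, b, c, ha, hb, hc, hx⟩
    have := fSymD3_lower a b c ha hb hc
    linarith
  · norm_num [fSymD3]
  · refine ⟨1/2, 1/2, 1/2, by norm_num, by norm_num, by norm_num, ?_⟩
    norm_num [fSymD3]
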